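/- Fix n ≥ 3. An n×n signature matrix ε satisfies ε_{jk}·ε_{kℓ}·ε_{jℓ} = −1 for all triples of distinct indices j, k, ℓ if and only if there exists a vector δ ∈ {±1}ⁿ such that ε_{kℓ} = −δ_k·δ_ℓ for all k ≠ ℓ. -/

import Mathlib

theorem signature_triple_condition_iff (n : ℕ) (hn : 3 ≤ n)
    (ε : Fin n → Fin n → ℤ)
    (hsym : ∀ k ℓ, ε k ℓ = ε ℓ k)
    (hoff : ∀ k ℓ, k ≠ ℓ → ε k ℓ = 1 ∨ ε k ℓ = -1)
    (hdiag : ∀ k, ε k k = -1) :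
    (∀ j k ℓ : Fin n, j ≠ k → k ≠ ℓ → j ≠ ℓ → ε j k * ε k ℓ * ε j ℓ = -1) ↔
    (∃ δ : Fin n → ℤ, (∀ k, δ k = 1 ∨ δ k = -1) ∧
      ∀ k ℓ, k ≠ ℓ → ε k ℓ = -(δ k * δ ℓ)) := by
  have hz : 0 < n := by omega
  set z : Fin n := ⟨0, hz⟩ with hzdef
  constructor
  · intro h
    refine ⟨fun k => if k = z then 1 else -(ε z k), ?_, ?_⟩
    · intro k
      by_cases hk : k = z
      · simp [hk]
      · rcases hoff z k (fun he => hk he.symm) with h1 | h1 <;> simp [hk, h1]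
    · intro k ℓ hkl
      by_cases hk : k = z
      · have hl : ¬ ℓ = z := fun he => hkl (by rw [hk, he])
        rw [hk]
        simp [hl]
      · by_cases hl : ℓ = z
        · have hk' : ¬ k = z := hk
          rw [hl]
          simp [hk', hsym k z]
        · have e1 := hoff z k (fun he => hk he.symm)
          have e2 := hoff z ℓ (fun he => hl he.symm)
          have e3 := hoff k ℓ hkl
          have key := h k z ℓ hk (fun he => hl he.symm) hkl
          rw [hsym k z] at key
          simp only [hk, hl, if_neg]
          rcases e1 with h1 | h1 <;> rcases e2 with h2 | h2 <;>
            rcases e3 with h3 | h3 <;> rw [h1, h2, h3] at key ⊢ <;> (norm_num at key <;> norm_num)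
  · rintro ⟨δ, hδ, hδe⟩ j k ℓ hjk hkl hjl
    rw [hδe j k hjk, hδe k ℓ hkl, hδe j ℓ hjl]
    rcases hδ j with h1 | h1 <;> rcases hδ k with h2 | h2 <;> rcases hδ ℓ with h3 | h3 <;>
      rw [h1, h2, h3] <;> ring
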